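/- Define for integers r ≥ 0, k ≥ 1 and real ω ∈ (0,1): h(k) = Σ_{ι=1}^{r+1} [1/(ι-1)!] (∏_{j=-ι+1}^{-1}(k+j)) (1-ω)^{ι-1} ω^{k-ι}. Then the partial derivative of h(k) with respect to ω equals [1/r!] (∏_{j=-r-1}^{-1}(k+j)) (1-ω)^r ω^{k-r-2}, which is strictly positive for all integers k > r+1. Hence h(k) is strictly increasing in ω on (0,1) for each fixed k > r+1. -/

import Mathlib

open Finset

private noncomputable def stmt9P (k : ℕ) : ℕ → ℝ := fun n => ∏ j ∈ Finset.range n, ((k : ℝ) - (j + 1))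

private noncomputable def stmt9f (k : ℕ) : ℕ → ℝ → ℝ := fun i w =>
  if i = 0 then 0 else
    (1 / (Nat.factorial (i - 1) : ℝ)) * stmt9P k i * (1 - w) ^ (i - 1) * w ^ (k - 1 - i)

private lemma stmt9_term (k i : ℕ) (hi : i + 1 < k) (ω : ℝ) :
    HasDerivAt (fun w : ℝ => (1 / (Nat.factorial i : ℝ)) * stmt9P k i * (1 - w) ^ i * w ^ (k - (1 + i)))
      (stmt9f k (i + 1) ω - stmt9f k i ω) ω := by
  have hsub : HasDerivAt (fun w : ℝ => 1 - w) (-1) ω := (hasDerivAt_id ω).const_sub 1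
  have h1 : HasDerivAt (fun w : ℝ => (1 - w) ^ i) ((i : ℝ) * (1 - ω) ^ (i - 1) * (-1)) ω :=
    (hasDerivAt_pow i (1 - ω)).comp ω hsub
  have h2 := hasDerivAt_pow (k - (1 + i)) ω
  have hp := (h1.mul h2).const_mul ((1 / (Nat.factorial i : ℝ)) * stmt9P k i)
  have hp' : HasDerivAt (fun w : ℝ => (1 / (Nat.factorial i : ℝ)) * stmt9P k i * (1 - w) ^ i * w ^ (k - (1 + i)))
      ((1 / (Nat.factorial i : ℝ)) * stmt9P k i *
        ((i : ℝ) * (1 - ω) ^ (i - 1) * (-1) * ω ^ (k - (1 + i)) +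
          (1 - ω) ^ i * ((k - (1 + i) : ℕ) * ω ^ (k - (1 + i) - 1)))) ω := by
    simpa [mul_assoc] using hp
  convert hp' using 1
  rcases i with _ | s
  · simp only [stmt9f, stmt9P]
    simp only [Nat.factorial, Finset.prod_range_succ, Finset.prod_range_zero]
    have h1 : (↑(k - (1 + 0)) : ℝ) = (k : ℝ) - 1 := by
      have : 1 ≤ k := by omega
      push_cast [Nat.cast_sub this]; ring
    have h2 : k - 1 - 1 = k - (1 + 0) - 1 := by omega
    simp [h1, h2]
  · have hne : s + 1 + 1 ≠ 0 := by omega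
    have hne' : s + 1 ≠ 0 := by omega
    simp only [stmt9f, if_neg hne, if_neg hne', Nat.add_sub_cancel]
    have hPsucc : stmt9P k (s + 2) = stmt9P k (s + 1) * ((k : ℝ) - (s + 2)) := by
      simp only [stmt9P, Finset.prod_range_succ]
      congr 1
      push_cast; ring
    have e1 : k - (1 + (s + 1)) = (k - 1 - (s + 2)) + 1 := by omega
    have e2 : k - 1 - (s + 1) = (k - 1 - (s + 2)) + 1 := by omega
    have e3 : k - (1 + (s + 1)) - 1 = k - 1 - (s + 2) := by omega
    have hcast : (↑(k - (1 + (s + 1))) : ℝ) = (k : ℝ) - (s + 2) := by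
      have : 1 + (s + 1) ≤ k := by omega
      push_cast [Nat.cast_sub this]; ring
    rw [hPsucc, hcast, e3, e1, e2]
    rw [Nat.factorial_succ]
    have hf : (Nat.factorial s : ℝ) ≠ 0 := Nat.cast_ne_zero.2 (Nat.factorial_ne_zero s)
    have hs1 : ((s : ℝ) + 1) ≠ 0 := by positivity
    push_cast
    field_simp
    ring

theorem stmt9 (r k : ℕ) (hk : r + 1 < k) :
    (∀ ω : ℝ, 0 < ω → ω < 1 →
      HasDerivAt (fun w : ℝ =>
          ∑ ι ∈ Finset.Icc 1 (r + 1),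
            (1 / (Nat.factorial (ι - 1) : ℝ)) *
              (∏ j ∈ Finset.range (ι - 1), ((k : ℝ) - (j + 1))) *
              (1 - w) ^ (ι - 1) * w ^ (k - ι))
        ((1 / (Nat.factorial r : ℝ)) *
            (∏ j ∈ Finset.range (r + 1), ((k : ℝ) - (j + 1))) *
            (1 - ω) ^ r * ω ^ (k - r - 2)) ω ∧
      0 < (1 / (Nat.factorial r : ℝ)) *
            (∏ j ∈ Finset.range (r + 1), ((k : ℝ) - (j + 1))) *
            (1 - ω) ^ r * ω ^ (k - r - 2)) ∧
    StrictMonoOn (fun w : ℝ =>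
        ∑ ι ∈ Finset.Icc 1 (r + 1),
          (1 / (Nat.factorial (ι - 1) : ℝ)) *
            (∏ j ∈ Finset.range (ι - 1), ((k : ℝ) - (j + 1))) *
            (1 - w) ^ (ι - 1) * w ^ (k - ι))
      (Set.Ioo (0 : ℝ) 1) := by
  have hfun : (fun w : ℝ =>
        ∑ ι ∈ Finset.Icc 1 (r + 1),
          (1 / (Nat.factorial (ι - 1) : ℝ)) *
            (∏ j ∈ Finset.range (ι - 1), ((k : ℝ) - (j + 1))) *
            (1 - w) ^ (ι - 1) * w ^ (k - ι))
      = fun w : ℝ => ∑ i ∈ Finset.range (r + 1),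
          (1 / (Nat.factorial i : ℝ)) * stmt9P k i * (1 - w) ^ i * w ^ (k - (1 + i)) := by
    funext w
    rw [show Finset.Icc 1 (r + 1) = Finset.Ico 1 (r + 2) from by rw [← Finset.Ico_add_one_right_eq_Icc]; rfl,
      Finset.sum_Ico_eq_sum_range]
    simp [stmt9P]
  have htarget : stmt9f k (r + 1) = fun ω : ℝ => (1 / (Nat.factorial r : ℝ)) *
      (∏ j ∈ Finset.range (r + 1), ((k : ℝ) - (j + 1))) * (1 - ω) ^ r * ω ^ (k - r - 2) := by
    funext ω
    simp only [stmt9f, stmt9P, Nat.add_sub_cancel, if_neg (Nat.succ_ne_zero r)]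
    rw [show k - 1 - (r + 1) = k - r - 2 from by omega]
  have hderiv : ∀ ω : ℝ, HasDerivAt (fun w : ℝ =>
        ∑ ι ∈ Finset.Icc 1 (r + 1),
          (1 / (Nat.factorial (ι - 1) : ℝ)) *
            (∏ j ∈ Finset.range (ι - 1), ((k : ℝ) - (j + 1))) *
            (1 - w) ^ (ι - 1) * w ^ (k - ι))
      ((1 / (Nat.factorial r : ℝ)) *
          (∏ j ∈ Finset.range (r + 1), ((k : ℝ) - (j + 1))) *
          (1 - ω) ^ r * ω ^ (k - r - 2)) ω := by
    intro ω
    rw [hfun]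
    have h := HasDerivAt.fun_sum (fun i (hi : i ∈ Finset.range (r + 1)) =>
      stmt9_term k i (by have := Finset.mem_range.1 hi; omega) ω)
    rw [Finset.sum_range_sub (fun i => stmt9f k i ω)] at h
    have h0 : stmt9f k 0 ω = 0 := by simp [stmt9f]
    rw [h0, sub_zero, htarget] at h
    exact h
  have hpos : ∀ ω : ℝ, 0 < ω → ω < 1 →
      0 < (1 / (Nat.factorial r : ℝ)) *
          (∏ j ∈ Finset.range (r + 1), ((k : ℝ) - (j + 1))) *
          (1 - ω) ^ r * ω ^ (k - r - 2) := by
    intro ω hω0 hω1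
    have hP : 0 < ∏ j ∈ Finset.range (r + 1), ((k : ℝ) - (j + 1)) := by
      apply Finset.prod_pos
      intro j hj
      have hj' := Finset.mem_range.1 hj
      have : (j : ℝ) + 1 < k := by
        have : (j : ℝ) ≤ r := by exact_mod_cast Nat.lt_succ_iff.1 hj'
        have hk' : (r : ℝ) + 1 < k := by exact_mod_cast hk
        linarith
      linarith
    have h1 : (0 : ℝ) < 1 / (Nat.factorial r : ℝ) := by positivity
    have h2 : (0 : ℝ) < (1 - ω) ^ r := pow_pos (by linarith) _
    have h3 : (0 : ℝ) < ω ^ (k - r - 2) := pow_pos hω0 _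
    exact mul_pos (mul_pos (mul_pos h1 hP) h2) h3
  refine ⟨fun ω hω0 hω1 => ⟨hderiv ω, hpos ω hω0 hω1⟩, ?_⟩
  apply strictMonoOn_of_deriv_pos (convex_Ioo 0 1)
  · apply Continuous.continuousOn
    apply continuous_finset_sum
    intro i _
    fun_prop
  · intro x hx
    rw [interior_Ioo] at hx
    rw [(hderiv x).deriv]
    exact hpos x hx.1 hx.2
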